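/- Let r > 0, let γ₀ ∈ ℍ, and let ṽ₀ ∈ ℝ³ be nonzero with ⟨ṽ₀, γ₀⟩ₘ = 0. Set λ := √⟨ṽ₀,ṽ₀⟩ₘ (which is a positive real number since ṽ₀ is spacelike), v₀ := λ⁻¹ ṽ₀, v₁ := −r γ₀ + √(1+r²) (v₀ ×ₘ γ₀), and w := v₀ ×ₘ v₁. Then {v₀,v₁,w} is a positive oriented orthonormal system, w ∈ ℍ, and the curve α(t) = √(1+r²) w + r cos(λt/r) v₁ + r sin(λt/r) v₀ satisfies α(0) = γ₀ and α̇(0) = ṽ₀. -/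

import Mathlib

noncomputable section

open Real

/-- The Minkowski inner product on ℝ³. -/
def mink (v w : Fin 3 → ℝ) : ℝ := v 0 * w 0 + v 1 * w 1 - v 2 * w 2

/-- The twisted cross product on ℝ³. -/
def mcross (v w : Fin 3 → ℝ) : Fin 3 → ℝ :=
  ![v 2 * w 1 - v 1 * w 2, v 0 * w 2 - v 2 * w 0, v 0 * w 1 - v 1 * w 0]

/-- A positive oriented orthonormal system with respect to the Minkowski metric. -/
def posOrth (v₀ v₁ w : Fin 3 → ℝ) : Prop :=
  mink v₀ v₁ = 0 ∧ mink v₀ w = 0 ∧ mink v₁ w = 0 ∧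
  mink v₀ v₀ = 1 ∧ mink v₁ v₁ = 1 ∧ mink w w = -1 ∧
  mcross v₀ v₁ = w

/-- Membership in the hyperbolic plane ℍ ⊂ ℝ³. -/
def inH (x : Fin 3 → ℝ) : Prop := x 2 ^ 2 - x 0 ^ 2 - x 1 ^ 2 = 1 ∧ 0 < x 2

lemma mink_mcross_left (v w : Fin 3 → ℝ) : mink v (mcross v w) = 0 := by
  simp [mink, mcross]; ring
lemma mink_mcross_right (v w : Fin 3 → ℝ) : mink w (mcross v w) = 0 := by
  simp [mink, mcross]; ring
lemma mink_mcross_mcross (v w : Fin 3 → ℝ) :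
    mink (mcross v w) (mcross v w) = mink v w ^ 2 - mink v v * mink w w := by
  simp [mink, mcross]; ring
lemma mcross_mcross (v w : Fin 3 → ℝ) :
    mcross v (mcross v w) = mink v v • w - mink v w • v := by
  funext i; fin_cases i <;> simp [mink, mcross] <;> ring
lemma mink_combo_left (a b : ℝ) (x y z : Fin 3 → ℝ) :
    mink (a • x + b • y) z = a * mink x z + b * mink y z := by
  simp [mink]; ring
lemma mink_combo_right (a b : ℝ) (x y z : Fin 3 → ℝ) :
    mink z (a • x + b • y) = a * mink z x + b * mink z y := by
  simp [mink]; ring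
lemma mink_smul_smul (a b : ℝ) (x y : Fin 3 → ℝ) :
    mink (a • x) (b • y) = a * b * mink x y := by
  simp [mink]; ring
lemma mink_comm (v w : Fin 3 → ℝ) : mink v w = mink w v := by
  simp [mink]; ring
lemma mcross_combo_right (a b : ℝ) (v x y : Fin 3 → ℝ) :
    mcross v (a • x + b • y) = a • mcross v x + b • mcross v y := by
  funext i; fin_cases i <;> simp [mcross] <;> ring

lemma spacelike_aux (a b c x y z : ℝ) (h1 : c^2 - a^2 - b^2 = 1) (hc : 0 < c)
    (ho : x*a + y*b - z*c = 0) (hne : ¬(x = 0 ∧ y = 0 ∧ z = 0)) :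
    0 < x*x + y*y - z*z := by
  by_contra h
  push_neg at h
  have h'2 : x^2 + y^2 ≤ z^2 := by nlinarith [h]
  have hab : a^2 + b^2 = c^2 - 1 := by linarith
  have habn : 0 ≤ c^2 - 1 := by nlinarith [sq_nonneg a, sq_nonneg b]
  have c1 : (x*a + y*b)^2 ≤ (x^2 + y^2) * (a^2 + b^2) := by
    nlinarith [sq_nonneg (x*b - y*a)]
  have e1 : z*c = x*a + y*b := by linarith
  have c2 : (z*c)^2 ≤ (x^2 + y^2) * (c^2 - 1) := by rw [e1, ← hab]; exact c1
  have c4 : (x^2 + y^2) * (c^2 - 1) ≤ z^2 * (c^2 - 1) :=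
    mul_le_mul_of_nonneg_right h'2 habn
  have hz2 : z^2 ≤ 0 := by nlinarith [c2, c4]
  have hz : z = 0 := pow_eq_zero_iff two_ne_zero |>.mp (le_antisymm hz2 (sq_nonneg _))
  have hx : x = 0 := by
    have : x^2 ≤ 0 := by nlinarith [sq_nonneg y, sq_nonneg z]
    exact pow_eq_zero_iff two_ne_zero |>.mp (le_antisymm this (sq_nonneg _))
  have hy : y = 0 := by
    have : y^2 ≤ 0 := by nlinarith [sq_nonneg x, sq_nonneg z]
    exact pow_eq_zero_iff two_ne_zero |>.mp (le_antisymm this (sq_nonneg _))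
  exact hne ⟨hx, hy, hz⟩

lemma w2pos_aux (r s a b c e f t : ℝ) (hr : 0 < r) (hs : 0 < s) (hs2 : s^2 = 1 + r^2)
    (hc : 0 < c) (h1 : c^2 - a^2 - b^2 = 1) (hx : e*e + f*f - t*t = 1)
    (ho : a*e + b*f - c*t = 0) : 0 < s*c + (-r)*t := by
  have hef : e^2 + f^2 = 1 + t^2 := by nlinarith [hx]
  have hab : a^2 + b^2 = c^2 - 1 := by linarith
  have c1 : (a*e + b*f)^2 ≤ (a^2 + b^2) * (e^2 + f^2) := by
    nlinarith [sq_nonneg (a*f - b*e)]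
  have e1 : c*t = a*e + b*f := by linarith
  have c2 : (c*t)^2 ≤ (c^2 - 1) * (1 + t^2) := by rw [e1, ← hab, ← hef]; exact c1
  have ht2 : t^2 ≤ c^2 - 1 := by nlinarith [c2]
  have hc1 : 1 ≤ c := by nlinarith [sq_nonneg a, sq_nonneg b]
  nlinarith [ht2, hs2, mul_pos hs hc, mul_pos hr hc, sq_nonneg (s*c - r*t),
    sq_nonneg (s*c + r*t), mul_pos (mul_pos hs hc) (mul_pos hr hc)]

/-- every initial condition (γ₀, ṽ₀) with ṽ₀ ≠ 0 tangent to ℍ at γ₀ is attained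
by a circle solution: the constructed frame is a positive oriented orthonormal system,
its center w lies in ℍ, and the circle has the prescribed initial values. -/
theorem stmt_3 (r : ℝ) (hr : 0 < r) (γ₀ vt : Fin 3 → ℝ)
    (hγ : inH γ₀) (hvt : vt ≠ 0) (hperp : mink vt γ₀ = 0) :
    let lam : ℝ := Real.sqrt (mink vt vt)
    let v₀ : Fin 3 → ℝ := lam⁻¹ • vt
    let v₁ : Fin 3 → ℝ := (-r) • γ₀ + Real.sqrt (1 + r ^ 2) • mcross v₀ γ₀
    let w : Fin 3 → ℝ := mcross v₀ v₁
    let α : ℝ → Fin 3 → ℝ := fun t =>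
      Real.sqrt (1 + r ^ 2) • w + (r * Real.cos (lam * t / r)) • v₁ +
        (r * Real.sin (lam * t / r)) • v₀
    0 < lam ∧ posOrth v₀ v₁ w ∧ inH w ∧ α 0 = γ₀ ∧ deriv α 0 = vt := by
  obtain ⟨hγ1, hγ2⟩ := hγ
  have hγm : mink γ₀ γ₀ = -1 := by
    show γ₀ 0 * γ₀ 0 + γ₀ 1 * γ₀ 1 - γ₀ 2 * γ₀ 2 = -1
    linear_combination (-1 : ℝ) * hγ1
  have hperp' : vt 0 * γ₀ 0 + vt 1 * γ₀ 1 - vt 2 * γ₀ 2 = 0 := hperp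
  -- positivity of the Minkowski norm of vt (vt is spacelike)
  have hm : 0 < mink vt vt := by
    refine spacelike_aux (γ₀ 0) (γ₀ 1) (γ₀ 2) (vt 0) (vt 1) (vt 2) hγ1 hγ2 hperp' ?_
    rintro ⟨hx, hy, hz⟩
    apply hvt
    funext i
    fin_cases i
    · exact hx
    · exact hy
    · exact hz
  intro lam v₀ v₁ w α
  have hv₀ : v₀ = lam⁻¹ • vt := rfl
  have hv₁ : v₁ = (-r) • γ₀ + Real.sqrt (1 + r ^ 2) • mcross v₀ γ₀ := rfl
  have hw : w = mcross v₀ v₁ := rfl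
  have hα : α = fun t =>
      Real.sqrt (1 + r ^ 2) • w + (r * Real.cos (lam * t / r)) • v₁ +
        (r * Real.sin (lam * t / r)) • v₀ := rfl
  have hlam : 0 < lam := Real.sqrt_pos.mpr hm
  have hlam2 : lam ^ 2 = mink vt vt := Real.sq_sqrt hm.le
  have hs_pos : 0 < Real.sqrt (1 + r ^ 2) := Real.sqrt_pos.mpr (by positivity)
  have hs2 : Real.sqrt (1 + r ^ 2) ^ 2 = 1 + r ^ 2 := Real.sq_sqrt (by positivity)
  set s := Real.sqrt (1 + r ^ 2) with hs_def
  clear_value lam v₀ v₁ w α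
  -- basic inner products
  have m00 : mink v₀ v₀ = 1 := by
    rw [hv₀, mink_smul_smul, ← hlam2]
    field_simp
  have m0γ : mink v₀ γ₀ = 0 := by
    have : mink (lam⁻¹ • vt) ((1 : ℝ) • γ₀) = lam⁻¹ * 1 * mink vt γ₀ :=
      mink_smul_smul _ _ _ _
    rw [hv₀]
    simpa [hperp] using this
  have mγx : mink γ₀ (mcross v₀ γ₀) = 0 := mink_mcross_right v₀ γ₀
  have mxγ : mink (mcross v₀ γ₀) γ₀ = 0 := by rw [mink_comm]; exact mγx
  have m0x : mink v₀ (mcross v₀ γ₀) = 0 := mink_mcross_left v₀ γ₀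
  have mxx : mink (mcross v₀ γ₀) (mcross v₀ γ₀) = 1 := by
    rw [mink_mcross_mcross, m0γ, m00, hγm]; ring
  have m01 : mink v₀ v₁ = 0 := by
    rw [hv₁, mink_combo_right, m0γ, m0x]; ring
  have m11 : mink v₁ v₁ = 1 := by
    rw [hv₁, mink_combo_left, mink_combo_right, mink_combo_right, hγm, mγx, mxγ, mxx]
    linear_combination hs2
  have m0w : mink v₀ w = 0 := by rw [hw]; exact mink_mcross_left _ _
  have m1w : mink v₁ w = 0 := by rw [hw]; exact mink_mcross_right _ _
  have mww : mink w w = -1 := by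
    rw [hw, mink_mcross_mcross, m01, m00, m11]; ring
  -- explicit formula for w
  have hw_eq : w = s • γ₀ + (-r) • mcross v₀ γ₀ := by
    rw [hw, hv₁, mcross_combo_right, mcross_mcross, m00, m0γ]
    rw [one_smul, zero_smul, sub_zero, add_comm]
  -- inH w
  have hwH1 : w 2 ^ 2 - w 0 ^ 2 - w 1 ^ 2 = 1 := by
    have : w 0 * w 0 + w 1 * w 1 - w 2 * w 2 = -1 := mww
    linear_combination (-1 : ℝ) * this
  have hw2pos : 0 < w 2 := by
    have hxx' : (mcross v₀ γ₀) 0 * (mcross v₀ γ₀) 0 + (mcross v₀ γ₀) 1 * (mcross v₀ γ₀) 1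
        - (mcross v₀ γ₀) 2 * (mcross v₀ γ₀) 2 = 1 := mxx
    have hor : γ₀ 0 * (mcross v₀ γ₀) 0 + γ₀ 1 * (mcross v₀ γ₀) 1
        - γ₀ 2 * (mcross v₀ γ₀) 2 = 0 := mγx
    have hw2 : w 2 = s * γ₀ 2 + (-r) * (mcross v₀ γ₀) 2 := by
      have h := congrFun hw_eq 2
      simp only [Pi.add_apply, Pi.smul_apply, smul_eq_mul] at h
      linarith [h]
    rw [hw2]
    exact w2pos_aux r s (γ₀ 0) (γ₀ 1) (γ₀ 2) _ _ _ hr hs_pos hs2 hγ2 hγ1 hxx' hor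
  -- α 0 = γ₀
  have hα0 : α 0 = γ₀ := by
    rw [hα]
    funext i
    have h1 := congrFun hw_eq i
    have h2 := congrFun hv₁ i
    simp only [Pi.add_apply, Pi.smul_apply, smul_eq_mul] at h1 h2 ⊢
    rw [mul_zero, zero_div, Real.cos_zero, Real.sin_zero, mul_zero, zero_mul, add_zero,
      mul_one]
    rw [h1, h2]
    linear_combination γ₀ i * hs2
  -- derivative
  have hu : HasDerivAt (fun t : ℝ => lam * t / r) (lam / r) 0 := by
    simpa using ((hasDerivAt_id (0 : ℝ)).const_mul lam).div_const r
  have hcos : HasDerivAt (fun t : ℝ => Real.cos (lam * t / r)) 0 0 := by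
    simpa using hu.cos
  have hsin : HasDerivAt (fun t : ℝ => Real.sin (lam * t / r)) (lam / r) 0 := by
    simpa using hu.sin
  have h2 : HasDerivAt (fun t : ℝ => r * Real.cos (lam * t / r)) 0 0 := by
    simpa using hcos.const_mul r
  have h3 : HasDerivAt (fun t : ℝ => r * Real.sin (lam * t / r)) lam 0 := by
    have := hsin.const_mul r
    have hval : r * (lam / r) = lam := by field_simp
    rwa [hval] at this
  have hda : HasDerivAt α vt 0 := by
    have h4 := ((hasDerivAt_const (0 : ℝ) (s • w)).add (h2.smul_const v₁)).add
      (h3.smul_const v₀)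
    have hval : (0 : Fin 3 → ℝ) + (0 : ℝ) • v₁ + lam • v₀ = vt := by
      rw [hv₀, smul_smul, mul_inv_cancel₀ hlam.ne', one_smul, zero_smul, add_zero,
        zero_add]
    rw [hval] at h4
    rw [hα]
    exact h4
  exact ⟨hlam, ⟨m01, m0w, m1w, m00, m11, mww, hw.symm⟩, ⟨hwH1, hw2pos⟩, hα0, hda.deriv⟩
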